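/- Let p>0, γ>0, η>0, and suppose u : [0,ρ) → [0,1) is differentiable with u'(r) ≤ -η r (1-u(r))^{-γ} for all r ∈ [0,ρ). Then (1-u(r))^{γ+1} ≥ ((γ+1)/2)·η·r² for all r ∈ [0,ρ). -/

import Mathlib

theorem single_point_profile_bound (p γ η ρ : ℝ) (hp : 0 < p) (hγ : 0 < γ)
    (hη : 0 < η) (hρ : 0 < ρ)
    (u u' : ℝ → ℝ)
    (hrange : ∀ r ∈ Set.Ico (0 : ℝ) ρ, 0 ≤ u r ∧ u r < 1)
    (hderiv : ∀ r ∈ Set.Ico (0 : ℝ) ρ, HasDerivAt u (u' r) r)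
    (hineq : ∀ r ∈ Set.Ico (0 : ℝ) ρ, u' r ≤ -η * r * (1 - u r) ^ (-γ)) :
    ∀ r ∈ Set.Ico (0 : ℝ) ρ, (1 - u r) ^ (γ + 1) ≥ ((γ + 1) / 2) * η * r ^ 2 := by
  intro r hr
  set F : ℝ → ℝ := fun x => (1 - u x) ^ (γ + 1) - (γ + 1) / 2 * η * x ^ 2 with hFdef
  have hpos : ∀ x ∈ Set.Ico (0 : ℝ) ρ, 0 < 1 - u x := by
    intro x hx
    have := (hrange x hx).2
    linarith
  have hF : ∀ x ∈ Set.Ico (0 : ℝ) ρ,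
      HasDerivAt F ((-u' x) * (γ + 1) * (1 - u x) ^ γ - (γ + 1) / 2 * η * (2 * x)) x := by
    intro x hx
    have h1 : HasDerivAt (fun y => 1 - u y) (-u' x) x := by
      simpa using (hderiv x hx).const_sub (1 : ℝ)
    have h2 : HasDerivAt (fun y => (1 - u y) ^ (γ + 1))
        ((-u' x) * (γ + 1) * (1 - u x) ^ (γ + 1 - 1)) x :=
      h1.rpow_const (Or.inl (ne_of_gt (hpos x hx)))
    have h3 : HasDerivAt (fun y : ℝ => (γ + 1) / 2 * η * y ^ 2)
        ((γ + 1) / 2 * η * (2 * x)) x := by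
      have := ((hasDerivAt_pow 2 x).const_mul ((γ + 1) / 2 * η))
      simpa [mul_comm, mul_assoc] using this
    have := h2.sub h3
    simp only [add_sub_cancel_right] at this
    exact this
  have hmono : MonotoneOn F (Set.Ico 0 ρ) := by
    apply monotoneOn_of_deriv_nonneg (convex_Ico 0 ρ)
    · exact fun x hx => (hF x hx).continuousAt.continuousWithinAt
    · rw [interior_Ico]
      exact fun x hx =>
        (hF x (Set.Ioo_subset_Ico_self hx)).differentiableAt.differentiableWithinAt
    · rw [interior_Ico]
      intro x hx
      have hx' : x ∈ Set.Ico (0 : ℝ) ρ := Set.Ioo_subset_Ico_self hx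
      rw [(hF x hx').deriv]
      have hxpos : 0 < x := hx.1
      have hP : 0 < 1 - u x := hpos x hx'
      have hineq' := hineq x hx'
      have hkey : η * x ≤ (-u' x) * (1 - u x) ^ γ := by
        have h4 : η * x * (1 - u x) ^ (-γ) ≤ -u' x := by linarith
        have h5 : η * x * (1 - u x) ^ (-γ) * (1 - u x) ^ γ ≤ (-u' x) * (1 - u x) ^ γ :=
          mul_le_mul_of_nonneg_right h4 (Real.rpow_nonneg hP.le _)
        calc η * x = η * x * ((1 - u x) ^ (-γ) * (1 - u x) ^ γ) := by
              rw [← Real.rpow_add hP, neg_add_cancel, Real.rpow_zero, mul_one]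
          _ ≤ (-u' x) * (1 - u x) ^ γ := by rw [← mul_assoc]; exact h5
      nlinarith [hkey, hγ]
  have h0 : (0 : ℝ) ∈ Set.Ico (0 : ℝ) ρ := ⟨le_refl 0, hρ⟩
  have hF0 : 0 ≤ F 0 := by
    have := Real.rpow_nonneg (hpos 0 h0).le (γ + 1)
    simp only [hFdef]
    simpa using this
  have := hmono h0 hr hr.1
  have hFr : 0 ≤ F r := le_trans hF0 this
  simp only [hFdef] at hFr
  linarith
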